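/- Let J be an adapted complex structure on a finite simple graph G, and let a and b be two edges of G sharing no common endpoint. If Ja = b, then both a and b are distinguished edges. -/
import Mathlib


/-!  Framework: the 2-step nilpotent Lie algebra `𝔫_G` associated to a finite simple
graph `G` (Dani–Mainkar construction), and adapted complex structures on it. -/

open scoped BigOperators

namespace GraphLie

variable {V : Type*} [Fintype V] [LinearOrder V]

/-- The underlying real vector space of the Lie algebra `𝔫_G` associated to a graph `G`:
real-valued functions on its basis `V ⊕ G.edgeSet` (vertices and edges). -/
abbrev Niln (G : SimpleGraph V) : Type _ := (V ⊕ G.edgeSet) → ℝ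

variable (G : SimpleGraph V) [DecidableRel G.Adj]

/-- The basis vector of `𝔫_G` corresponding to the vertex `v`. -/
noncomputable def vtx (v : V) : Niln G := Pi.single (Sum.inl v) 1

/-- The basis vector of `𝔫_G` corresponding to the edge `e`. -/
noncomputable def edg (e : G.edgeSet) : Niln G := Pi.single (Sum.inr e) 1

/-- The basis vector of `𝔫_G` corresponding to a vertex or an edge. -/
noncomputable def basisVec (b : V ⊕ G.edgeSet) : Niln G := Pi.single b 1

/-- The bracket of two vertex generators: for adjacent vertices `i < j` (with respect to
the chosen labeling of the vertices) `[v_i, v_j] = e_{i,j}` and `[v_j, v_i] = -e_{i,j}`;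
non-adjacent vertices commute. -/
noncomputable def bracketVtx (i j : V) : Niln G :=
  if h : G.Adj i j then
    (if i < j then edg G ⟨s(i, j), G.mem_edgeSet.mpr h⟩
     else - edg G ⟨s(i, j), G.mem_edgeSet.mpr h⟩)
  else 0

/-- The Lie bracket of `𝔫_G`, extended bilinearly from the generators; all the
edge generators are central. -/
noncomputable def bracket (x y : Niln G) : Niln G :=
  ∑ i : V, ∑ j : V, (x (Sum.inl i) * y (Sum.inl j)) • bracketVtx G i j

/-- An adapted complex structure on the graph `G`: a linear endomorphism `J` of `𝔫_G`
with `J ∘ J = -id`, whose Nijenhuis tensor vanishes, and which sends each basis vector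
(vertex or edge) to plus or minus a basis vector. -/
structure AdaptedCS : Type _ where
  J : Niln G →ₗ[ℝ] Niln G
  j_squared : ∀ x, J (J x) = -x
  integrable : ∀ x y,
    bracket G x y + J (bracket G (J x) y + bracket G x (J y)) - bracket G (J x) (J y) = 0
  adapted : ∀ b : V ⊕ G.edgeSet,
    (∃ b', J (basisVec G b) = basisVec G b') ∨ (∃ b', J (basisVec G b) = - basisVec G b')

variable {G}

/-- An edge of `G` joining vertices `v` and `w` is distinguished if `Jv = w` or `Jw = v`. -/
def AdaptedCS.Distinguished (Jc : AdaptedCS G) (e : G.edgeSet) : Prop :=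
  ∃ v w : V, (e : Sym2 V) = s(v, w) ∧
    (Jc.J (vtx G v) = vtx G w ∨ Jc.J (vtx G w) = vtx G v)

end GraphLie

namespace GraphLie

variable {V : Type*} [Fintype V] [LinearOrder V] {G : SimpleGraph V} [DecidableRel G.Adj]

set_option linter.unusedSectionVars false

lemma bracket_vtx_vtx (i j : V) : bracket G (vtx G i) (vtx G j) = bracketVtx G i j := by
  simp [bracket, vtx, Pi.single_apply, ite_smul, mul_ite, ite_and]

lemma bracket_edg_left (e : G.edgeSet) (y : Niln G) : bracket G (edg G e) y = 0 := by
  simp [bracket, edg, Pi.single_apply]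

lemma bracket_edg_right (x : Niln G) (e : G.edgeSet) : bracket G x (edg G e) = 0 := by
  simp [bracket, edg, Pi.single_apply]

lemma bracket_smul_left (c : ℝ) (x y : Niln G) :
    bracket G (c • x) y = c • bracket G x y := by
  simp only [bracket, Pi.smul_apply, smul_eq_mul, Finset.smul_sum, smul_smul, mul_assoc]

lemma bracket_smul_right (c : ℝ) (x y : Niln G) :
    bracket G x (c • y) = c • bracket G x y := by
  unfold bracket
  rw [Finset.smul_sum]
  refine Finset.sum_congr rfl fun i _ => ?_
  rw [Finset.smul_sum]
  refine Finset.sum_congr rfl fun j _ => ?_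
  rw [Pi.smul_apply, smul_smul, smul_eq_mul]
  congr 1; ring

lemma bracketVtx_apply_ne (i j : V) (b : G.edgeSet) (h : (b : Sym2 V) ≠ s(i, j)) :
    bracketVtx G i j (Sum.inr b) = 0 := by
  unfold bracketVtx
  split_ifs with h1 h2
  · rw [edg, Pi.single_apply, if_neg]
    intro hc
    exact h (congrArg Subtype.val (Sum.inr.inj hc))
  · rw [Pi.neg_apply, edg, Pi.single_apply, if_neg, neg_zero]
    intro hc
    exact h (congrArg Subtype.val (Sum.inr.inj hc))
  · rfl

lemma AdaptedCS.adapted' (Jc : AdaptedCS G) (p : V ⊕ G.edgeSet) :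
    ∃ (s : ℝ) (q : V ⊕ G.edgeSet), (s = 1 ∨ s = -1) ∧
      Jc.J (basisVec G p) = s • basisVec G q := by
  rcases Jc.adapted p with ⟨q, hq⟩ | ⟨q, hq⟩
  · exact ⟨1, q, Or.inl rfl, by simpa using hq⟩
  · exact ⟨-1, q, Or.inr rfl, by rw [hq]; module⟩

lemma AdaptedCS.j_inj (Jc : AdaptedCS G) {x y : Niln G} (h : Jc.J x = Jc.J y) : x = y := by
  have h2 := congrArg Jc.J h
  rw [Jc.j_squared, Jc.j_squared] at h2
  simpa using h2

lemma key (Jc : AdaptedCS G) (a b : G.edgeSet) (δ : ℝ) (hδ : δ = 1 ∨ δ = -1)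
    (hdisj : ∀ x : V, x ∈ (a : Sym2 V) → x ∉ (b : Sym2 V))
    (hab : Jc.J (edg G a) = δ • edg G b)
    (v₁ v₂ : V) (hlt : v₁ < v₂) (ha : (a : Sym2 V) = s(v₁, v₂)) :
    Jc.Distinguished a := by
  have hδ0 : δ ≠ 0 := by rcases hδ with h | h <;> rw [h] <;> norm_num
  have hadj : G.Adj v₁ v₂ := G.mem_edgeSet.mp (ha ▸ a.2)
  have hv1a : v₁ ∈ (a : Sym2 V) := by rw [ha]; exact Sym2.mem_mk_left _ _
  have hv2a : v₂ ∈ (a : Sym2 V) := by rw [ha]; exact Sym2.mem_mk_right _ _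
  have hA : bracket G (vtx G v₁) (vtx G v₂) = edg G a := by
    rw [bracket_vtx_vtx, bracketVtx, dif_pos hadj, if_pos hlt]
    exact congrArg (edg G) (Subtype.ext ha.symm)
  obtain ⟨s₁, p₁, hs₁, hp₁⟩ := Jc.adapted' (Sum.inl v₁)
  obtain ⟨s₂, p₂, hs₂, hp₂⟩ := Jc.adapted' (Sum.inl v₂)
  have hvb1 : Jc.J (vtx G v₁) = s₁ • basisVec G p₁ := hp₁
  have hvb2 : Jc.J (vtx G v₂) = s₂ • basisVec G p₂ := hp₂
  -- the integrability equation, after applying J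
  have hN := Jc.integrable (vtx G v₁) (vtx G v₂)
  have hJN := congrArg Jc.J hN
  rw [map_sub, map_add, Jc.j_squared, map_zero, hA, hab] at hJN
  -- hJN : δ • edg G b + (-(B1 + B2)) - J B3 = 0
  have hJN' := congrFun hJN (Sum.inr b)
  -- coefficient computations
  have hBname : ∀ (u : V) (p : V ⊕ G.edgeSet) (s : ℝ) (x : Niln G)
      (hx : x = s • basisVec G p) (hu : u ∈ (a : Sym2 V)),
      bracket G x (vtx G u) (Sum.inr b) = 0 ∧ bracket G (vtx G u) x (Sum.inr b) = 0 := by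
    intro u p s x hx hu
    subst hx
    rcases p with w | e
    · have hne : (b : Sym2 V) ≠ s(w, u) := by
        intro hc
        exact hdisj u hu (by rw [hc]; exact Sym2.mem_mk_right _ _)
      have hne' : (b : Sym2 V) ≠ s(u, w) := by
        intro hc
        exact hdisj u hu (by rw [hc]; exact Sym2.mem_mk_left _ _)
      constructor
      · rw [bracket_smul_left]
        show s * _ = 0
        rw [show basisVec G (Sum.inl w) = vtx G w from rfl, bracket_vtx_vtx,
          bracketVtx_apply_ne _ _ _ hne, mul_zero]
      · rw [bracket_smul_right]
        show s * _ = 0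
        rw [show basisVec G (Sum.inl w) = vtx G w from rfl, bracket_vtx_vtx,
          bracketVtx_apply_ne _ _ _ hne', mul_zero]
    · constructor
      · rw [bracket_smul_left, show basisVec G (Sum.inr e) = edg G e from rfl,
          bracket_edg_left, smul_zero]; rfl
      · rw [bracket_smul_right, show basisVec G (Sum.inr e) = edg G e from rfl,
          bracket_edg_right, smul_zero]; rfl
  have hB1 : bracket G (Jc.J (vtx G v₁)) (vtx G v₂) (Sum.inr b) = 0 :=
    (hBname v₂ p₁ s₁ _ hvb1 hv2a).1
  have hB2 : bracket G (vtx G v₁) (Jc.J (vtx G v₂)) (Sum.inr b) = 0 :=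
    (hBname v₁ p₂ s₂ _ hvb2 hv1a).2
  have hedgb : edg G b (Sum.inr b) = 1 := by rw [edg, Pi.single_eq_same]
  have hB3 : Jc.J (bracket G (Jc.J (vtx G v₁)) (Jc.J (vtx G v₂))) (Sum.inr b) = δ := by
    have := hJN'
    simp only [Pi.add_apply, Pi.sub_apply, Pi.neg_apply, Pi.smul_apply, Pi.zero_apply,
      smul_eq_mul, hedgb, hB1, hB2] at this
    linarith
  -- analyze B3
  rcases p₁ with u₁ | e₁
  swap
  · exfalso
    rw [hvb1, bracket_smul_left, show basisVec G (Sum.inr e₁) = edg G e₁ from rfl,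
      bracket_edg_left, smul_zero, map_zero] at hB3
    exact hδ0 (by simpa using hB3.symm)
  rcases p₂ with u₂ | e₂
  swap
  · exfalso
    rw [hvb2, bracket_smul_right, show basisVec G (Sum.inr e₂) = edg G e₂ from rfl,
      bracket_edg_right, smul_zero, map_zero] at hB3
    exact hδ0 (by simpa using hB3.symm)
  rw [hvb1, hvb2, bracket_smul_left, bracket_smul_right,
    show basisVec G (Sum.inl u₁) = vtx G u₁ from rfl,
    show basisVec G (Sum.inl u₂) = vtx G u₂ from rfl, bracket_vtx_vtx] at hB3
  by_cases hadj' : G.Adj u₁ u₂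
  swap
  · exfalso
    rw [bracketVtx, dif_neg hadj', smul_zero, smul_zero, map_zero] at hB3
    exact hδ0 (by simpa using hB3.symm)
  set c : G.edgeSet := ⟨s(u₁, u₂), G.mem_edgeSet.mpr hadj'⟩ with hc
  have hbv : ∃ τ : ℝ, (τ = 1 ∨ τ = -1) ∧ bracketVtx G u₁ u₂ = τ • edg G c := by
    rw [bracketVtx, dif_pos hadj']
    by_cases h : u₁ < u₂
    · exact ⟨1, Or.inl rfl, by rw [if_pos h, one_smul]⟩
    · exact ⟨-1, Or.inr rfl, by rw [if_neg h]; module⟩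
  obtain ⟨τ, hτ, hbveq⟩ := hbv
  rw [hbveq] at hB3
  obtain ⟨s₃, p₃, hs₃, hp₃⟩ := Jc.adapted' (Sum.inr c)
  have hjc0 : Jc.J (edg G c) = s₃ • basisVec G p₃ := hp₃
  rw [smul_smul, smul_smul, map_smul, hjc0] at hB3
  have hp₃b : p₃ = Sum.inr b := by
    by_contra hne
    rw [Pi.smul_apply, Pi.smul_apply, basisVec, Pi.single_apply, if_neg (Ne.symm hne)] at hB3
    simp at hB3
    exact hδ0 hB3.symm
  subst hp₃b
  -- J (edg c) = s₃ • edg b, and J (edg a) = δ • edg b ⇒ c = a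
  have hjc : Jc.J (edg G c) = s₃ • edg G b := hp₃
  have hδδ : δ * δ = 1 := by rcases hδ with h | h <;> rw [h] <;> norm_num
  have hca : edg G c = (s₃ * δ) • edg G a := by
    apply Jc.j_inj
    rw [map_smul, hab, hjc, smul_smul, mul_assoc, hδδ, mul_one]
  have hceqa : c = a := by
    by_contra hne
    have := congrFun hca (Sum.inr c)
    rw [edg, edg, Pi.single_eq_same, Pi.smul_apply, Pi.single_apply,
      if_neg (by exact fun h => hne (Sum.inr.inj h))] at this
    simp at this
  have hsym : s(v₁, v₂) = s(u₁, u₂) := by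
    rw [← ha, ← hceqa]
  rw [Sym2.eq_iff] at hsym
  -- rule out the fixed case, using J² = -1
  have hfix : ∀ (u : V) (s : ℝ), (s = 1 ∨ s = -1) → Jc.J (vtx G u) = s • vtx G u → False := by
    intro u s hs hjs
    have h2 := Jc.j_squared (vtx G u)
    rw [hjs, map_smul, hjs, smul_smul] at h2
    have hss : s * s = 1 := by rcases hs with h | h <;> rw [h] <;> norm_num
    rw [hss, one_smul] at h2
    have := congrFun h2 (Sum.inl u)
    rw [Pi.neg_apply, vtx, Pi.single_eq_same] at this
    norm_num at this
  rcases hsym with ⟨h1, h2⟩ | ⟨h1, h2⟩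
  · exact absurd hvb1 (fun h => hfix v₁ s₁ hs₁ (by rwa [← h1] at h))
  -- u₁ = v₂, u₂ = v₁
  subst h1; subst h2
  have hj1 : Jc.J (vtx G v₁) = s₁ • vtx G v₂ := hvb1
  have hj2 : Jc.J (vtx G v₂) = s₂ • vtx G v₁ := hvb2
  have h2 := Jc.j_squared (vtx G v₁)
  rw [hj1, map_smul, hj2, smul_smul] at h2
  have hs12 : s₁ * s₂ = -1 := by
    have := congrFun h2 (Sum.inl v₁)
    rw [Pi.smul_apply, Pi.neg_apply, vtx, Pi.single_eq_same] at this
    simpa using this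
  rcases hs₁ with h | h
  · refine ⟨v₁, v₂, ha, Or.inl ?_⟩
    rw [hj1, h, one_smul]
  · refine ⟨v₁, v₂, ha, Or.inr ?_⟩
    have hs2 : s₂ = 1 := by rw [h] at hs12; linarith
    rw [hj2, hs2, one_smul]

/-- If `a` and `b` are two edges of `G` sharing no common endpoint and
`Ja = b`, then both `a` and `b` are distinguished. -/
theorem statement3 (Jc : AdaptedCS G) (a b : G.edgeSet)
    (hdisj : ∀ x : V, x ∈ (a : Sym2 V) → x ∉ (b : Sym2 V))
    (hab : Jc.J (edg G a) = edg G b) :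
    Jc.Distinguished a ∧ Jc.Distinguished b := by
  have hdisj' : ∀ x : V, x ∈ (b : Sym2 V) → x ∉ (a : Sym2 V) := fun x hb haa => hdisj x haa hb
  have hba : Jc.J (edg G b) = (-1 : ℝ) • edg G a := by
    have := Jc.j_squared (edg G a)
    rw [hab] at this
    rw [this]; module
  have hrep : ∀ (e : G.edgeSet), ∃ x y : V, x < y ∧ (e : Sym2 V) = s(x, y) := by
    intro e
    obtain ⟨⟨x, y⟩, hxy⟩ := Quot.exists_rep (e : Sym2 V)
    have h1 : (e : Sym2 V) = s(x, y) := hxy.symm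
    have hadj : G.Adj x y := G.mem_edgeSet.mp (h1 ▸ e.2)
    rcases lt_trichotomy x y with h | h | h
    · exact ⟨x, y, h, h1⟩
    · exact absurd h hadj.ne
    · exact ⟨y, x, h, by rw [h1]; exact Sym2.eq_swap⟩
  obtain ⟨x₁, y₁, hlt₁, hrep₁⟩ := hrep a
  obtain ⟨x₂, y₂, hlt₂, hrep₂⟩ := hrep b
  constructor
  · exact key Jc a b 1 (Or.inl rfl) hdisj (by rw [hab, one_smul]) x₁ y₁ hlt₁ hrep₁
  · exact key Jc b a (-1) (Or.inr rfl) hdisj' hba x₂ y₂ hlt₂ hrep₂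

end GraphLie
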